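/- For every eigenvalue λ of the random unitary operation Φ with |λ| = 1, the eigenspace Ker(Φ − λ·id) intersects the range Ran(Φ − λ·id) trivially: Ker(Φ − λ·id) ∩ Ran(Φ − λ·id) = {0}. -/

import Mathlib

open Matrix BigOperators

attribute [local instance] Matrix.frobeniusNormedAddCommGroup Matrix.frobeniusNormedSpace

lemma frob_trace {d : ℕ} (A : Matrix (Fin d) (Fin d) ℂ) :
    (Matrix.trace (Aᴴ * A)).re = ∑ i, ∑ j, ‖A i j‖ ^ (2:ℝ) := by
  simp only [Matrix.trace, Matrix.mul_apply, Matrix.conjTranspose_apply, Matrix.diag,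
    Complex.re_sum, Complex.conj_mul', Complex.normSq_eq_norm_sq,
    Real.rpow_natCast]
  rw [Finset.sum_comm]
  refine Finset.sum_congr rfl fun i _ => Finset.sum_congr rfl fun j _ => ?_
  rw [show ((2:ℝ) = ((2:ℕ):ℝ)) by norm_num, Real.rpow_natCast]
  simp [Complex.sq_norm, Complex.normSq_apply]

lemma frob_unitary {d : ℕ} (V ρ : Matrix (Fin d) (Fin d) ℂ)
    (hV : V ∈ Matrix.unitaryGroup (Fin d) ℂ) : ‖V * ρ * Vᴴ‖ = ‖ρ‖ := by
  have h1 : Vᴴ * V = 1 := hV.1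
  have key : Matrix.trace ((V * ρ * Vᴴ)ᴴ * (V * ρ * Vᴴ)) = Matrix.trace (ρᴴ * ρ) := by
    have h2 : (V * ρ * Vᴴ)ᴴ * (V * ρ * Vᴴ) = V * (ρᴴ * ρ) * Vᴴ := by
      have : (V * ρ * Vᴴ)ᴴ = V * ρᴴ * Vᴴ := by
        simp only [Matrix.conjTranspose_mul, Matrix.conjTranspose_conjTranspose]
        noncomm_ring
      rw [this]
      calc V * ρᴴ * Vᴴ * (V * ρ * Vᴴ) = V * ρᴴ * (Vᴴ * V) * (ρ * Vᴴ) := by noncomm_ring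
        _ = V * (ρᴴ * ρ) * Vᴴ := by rw [h1]; noncomm_ring
    rw [h2, Matrix.trace_mul_cycle, ← Matrix.mul_assoc, h1, Matrix.one_mul]
  rw [Matrix.frobenius_norm_def, Matrix.frobenius_norm_def, ← frob_trace, ← frob_trace, key]

theorem stmt_3 {d m : ℕ} (hd : 1 ≤ d)
    (U : Fin m → Matrix (Fin d) (Fin d) ℂ)
    (hU : ∀ i, U i ∈ Matrix.unitaryGroup (Fin d) ℂ)
    (p : Fin m → ℝ) (hp : ∀ i, 0 < p i) (hpsum : ∑ i, p i = 1)
    (Φ : Matrix (Fin d) (Fin d) ℂ → Matrix (Fin d) (Fin d) ℂ)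
    (hΦ : ∀ ρ, Φ ρ = ∑ i, (p i : ℂ) • (U i * ρ * (U i)ᴴ))
    (lam : ℂ) (hlam : ‖lam‖ = 1)
    (X : Matrix (Fin d) (Fin d) ℂ)
    (hker : Φ X = lam • X)
    (hran : ∃ Y, X = Φ Y - lam • Y) :
    X = 0 := by
  obtain ⟨Y, hY⟩ := hran
  have hlam0 : lam ≠ 0 := by
    intro h; rw [h] at hlam; simp at hlam
  -- contraction
  have hcontr : ∀ ρ, ‖Φ ρ‖ ≤ ‖ρ‖ := by
    intro ρ
    rw [hΦ]
    calc ‖∑ i, (p i : ℂ) • (U i * ρ * (U i)ᴴ)‖ ≤ ∑ i, ‖(p i : ℂ) • (U i * ρ * (U i)ᴴ)‖ :=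
          norm_sum_le _ _
      _ = ∑ i, p i * ‖ρ‖ := by
          refine Finset.sum_congr rfl fun i _ => ?_
          rw [norm_smul, frob_unitary _ _ (hU i)]
          simp [abs_of_pos (hp i)]
      _ = ‖ρ‖ := by rw [← Finset.sum_mul, hpsum, one_mul]
  -- linearity
  have hadd : ∀ A B, Φ (A + B) = Φ A + Φ B := by
    intro A B
    simp only [hΦ, ← Finset.sum_add_distrib]
    refine Finset.sum_congr rfl fun i _ => ?_
    rw [← smul_add]
    congr 1
    noncomm_ring
  have hsmul : ∀ (c : ℂ) A, Φ (c • A) = c • Φ A := by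
    intro c A
    simp only [hΦ, Finset.smul_sum]
    refine Finset.sum_congr rfl fun i _ => ?_
    rw [smul_comm]
    congr 1
    rw [Matrix.mul_smul, Matrix.smul_mul]
  -- iterate formula
  have key : ∀ n : ℕ, Φ^[n] Y = lam ^ n • (Y + (n : ℂ) • lam⁻¹ • X) := by
    intro n
    induction n with
    | zero => simp
    | succ n ih =>
      rw [Function.iterate_succ_apply', ih, hsmul, hadd, hsmul, hsmul]
      have hΦY : Φ Y = lam • Y + X := by rw [hY]; abel
      rw [hΦY, hker]
      push_cast
      match_scalars <;> field_simp <;> ring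
  -- norm bound
  have hbound : ∀ n : ℕ, ‖Φ^[n] Y‖ ≤ ‖Y‖ := by
    intro n
    induction n with
    | zero => simp
    | succ n ih =>
      rw [Function.iterate_succ_apply']
      exact (hcontr _).trans ih
  have hnorm : ∀ n : ℕ, (n : ℝ) * ‖X‖ ≤ 2 * ‖Y‖ := by
    intro n
    have h1 := hbound n
    rw [key n, norm_smul] at h1
    have hl : ‖lam ^ n‖ = 1 := by
      rw [norm_pow]; simp [hlam]
    rw [hl, one_mul] at h1
    have h2 : ‖(n : ℂ) • lam⁻¹ • X‖ - ‖Y‖ ≤ ‖Y + (n : ℂ) • lam⁻¹ • X‖ := by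
      have := norm_add_le (-Y) (Y + (n : ℂ) • lam⁻¹ • X)
      simp at this
      linarith [this]
    have h3 : ‖(n : ℂ) • lam⁻¹ • X‖ = (n : ℝ) * ‖X‖ := by
      rw [norm_smul, norm_smul]
      simp [hlam, map_inv₀]
    linarith
  by_contra hX
  have hXpos : 0 < ‖X‖ := by
    rw [norm_pos_iff]; exact hX
  obtain ⟨n, hn⟩ := exists_nat_gt (2 * ‖Y‖ / ‖X‖)
  have := hnorm n
  rw [div_lt_iff₀ hXpos] at hn
  linarith
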